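/- Let ρ = (ρ₀, ρ₁, ρ₂) be a Markov triple, s := ρ₁ − 3ρ₀ρ₂, and μ₁ := (ρ₀, s, ρ₂). Then there is no d = (d₀, d₁, d₂) ∈ ℤ³ such that d × ρ = −μ₁ and gcd(dᵢ, 3ρᵢ) = 1 for all i ∈ {0,1,2}. (This is the numerical core of the theorem that for an elliptic helix of polynomial growth the rank triple must itself be a Markov triple, ruling out the case rank vector = 3ρ.) -/

import Mathlib

/-- The standard cross product on `ℤ³`. -/
def cross3 (a b : Fin 3 → ℤ) : Fin 3 → ℤ :=
  ![a 1 * b 2 - a 2 * b 1, a 2 * b 0 - a 0 * b 2, a 0 * b 1 - a 1 * b 0]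

set_option synthInstance.maxSize 2000 in
set_option synthInstance.maxHeartbeats 1000000 in
set_option maxHeartbeats 1000000 in
/-- Mod-3 base case: no solutions with all six variables nonzero mod 3. -/
lemma mod3_base : ∀ a b c d0 d1 d2 : ZMod 3, a ≠ 0 → b ≠ 0 → c ≠ 0 →
    d0 ≠ 0 → d1 ≠ 0 → d2 ≠ 0 →
    d1 * c - d2 * b = -a → d2 * a - d0 * c = -b → d0 * b - d1 * a = -c → False := by
  decide

lemma sq_sq_zmod3 : ∀ x y : ZMod 3, x ^ 2 + y ^ 2 = 0 → x = 0 ∧ y = 0 := by decide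

/-- 3-adic descent. -/
lemma descent (n : ℕ) : ∀ a b c t d0 d1 d2 : ℤ, 0 < a → 0 < b → 0 < c →
    a + b + c ≤ (n : ℤ) →
    a ^ 2 + b ^ 2 + c ^ 2 = 3 * t * a * b * c →
    d1 * c - d2 * b = -a →
    d2 * a - d0 * c = -b + 3 * t * a * c →
    d0 * b - d1 * a = -c →
    ¬ (3 : ℤ) ∣ d0 → ¬ (3 : ℤ) ∣ d1 → ¬ (3 : ℤ) ∣ d2 → False := by
  induction n with
  | zero => intro a b c t d0 d1 d2 ha hb hc hn _ _ _ _ _ _ _; omega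
  | succ n ih =>
    intro a b c t d0 d1 d2 ha hb hc hn hM e1 e2 e3 h0 h1 h2
    by_cases hda : (3 : ℤ) ∣ a
    · -- then 3 ∣ b and 3 ∣ c
      have hab : ((b : ZMod 3)) ^ 2 + ((c : ZMod 3)) ^ 2 = 0 := by
        have := congrArg (fun z : ℤ => (z : ZMod 3)) hM
        push_cast at this
        have ha3 : ((a : ZMod 3)) = 0 := by
          rwa [ZMod.intCast_zmod_eq_zero_iff_dvd]
        rw [ha3] at this
        ring_nf at this ⊢
        linear_combination this
      obtain ⟨hb3, hc3⟩ := sq_sq_zmod3 _ _ hab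
      have hdb : (3 : ℤ) ∣ b := by
        have := (ZMod.intCast_zmod_eq_zero_iff_dvd b 3).mp hb3
        exact_mod_cast this
      have hdc : (3 : ℤ) ∣ c := by
        have := (ZMod.intCast_zmod_eq_zero_iff_dvd c 3).mp hc3
        exact_mod_cast this
      obtain ⟨a', rfl⟩ := hda
      obtain ⟨b', rfl⟩ := hdb
      obtain ⟨c', rfl⟩ := hdc
      have ha' : 0 < a' := by linarith
      have hb' : 0 < b' := by linarith
      have hc' : 0 < c' := by linarith
      refine ih a' b' c' (3 * t) d0 d1 d2 ha' hb' hc' (by omega) ?_ ?_ ?_ ?_ h0 h1 h2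
      · nlinarith [hM]
      · linarith [e1]
      · nlinarith [e2]
      · linarith [e3]
    · -- all of a, b, c are units mod 3
      -- first, 3∤a forces 3∤b and 3∤c via Markov mod 3
      have hcast : ∀ x : ℤ, ¬ (3 : ℤ) ∣ x → ((x : ZMod 3)) ≠ 0 := by
        intro x hx h
        exact hx ((ZMod.intCast_zmod_eq_zero_iff_dvd x 3).mp h)
      have hMc := congrArg (fun z : ℤ => (z : ZMod 3)) hM
      have e1c := congrArg (fun z : ℤ => (z : ZMod 3)) e1
      have e2c := congrArg (fun z : ℤ => (z : ZMod 3)) e2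
      have e3c := congrArg (fun z : ℤ => (z : ZMod 3)) e3
      push_cast at hMc e1c e2c e3c
      have h3 : (3 : ZMod 3) = 0 := by decide
      rw [h3] at e2c
      -- simplify 3 * ... terms
      by_cases hdb : (3 : ℤ) ∣ b
      · -- then a² + c² ≡ 0 mod 3, so 3 ∣ a, contradiction
        have hb3 : ((b : ZMod 3)) = 0 := by rwa [ZMod.intCast_zmod_eq_zero_iff_dvd]
        have : ((a : ZMod 3)) ^ 2 + ((c : ZMod 3)) ^ 2 = 0 := by
          rw [hb3] at hMc
          ring_nf at hMc ⊢
          linear_combination hMc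
        exact hda ((ZMod.intCast_zmod_eq_zero_iff_dvd a 3).mp (sq_sq_zmod3 _ _ this).1)
      by_cases hdc : (3 : ℤ) ∣ c
      · have hc3 : ((c : ZMod 3)) = 0 := by rwa [ZMod.intCast_zmod_eq_zero_iff_dvd]
        have : ((a : ZMod 3)) ^ 2 + ((b : ZMod 3)) ^ 2 = 0 := by
          rw [hc3] at hMc
          ring_nf at hMc ⊢
          linear_combination hMc
        exact hda ((ZMod.intCast_zmod_eq_zero_iff_dvd a 3).mp (sq_sq_zmod3 _ _ this).1)
      refine mod3_base (a : ZMod 3) (b : ZMod 3) (c : ZMod 3) (d0 : ZMod 3)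
        (d1 : ZMod 3) (d2 : ZMod 3) (hcast a hda) (hcast b hdb) (hcast c hdc)
        (hcast d0 h0) (hcast d1 h1) (hcast d2 h2) ?_ ?_ ?_
      · linear_combination e1c
      · linear_combination e2c
      · linear_combination e3c

/-- For a Markov triple `ρ`, with `s := ρ₁ − 3ρ₀ρ₂` and `μ₁ := (ρ₀, s, ρ₂)`, there is
no `d ∈ ℤ³` with `d × ρ = −μ₁` and `gcd(dᵢ, 3ρᵢ) = 1` for all `i ∈ {0,1,2}`. -/
theorem no_degree_for_triple_rank (ρ₀ ρ₁ ρ₂ : ℤ)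
    (h₀ : 0 < ρ₀) (h₁ : 0 < ρ₁) (h₂ : 0 < ρ₂)
    (hM : ρ₀ ^ 2 + ρ₁ ^ 2 + ρ₂ ^ 2 = 3 * ρ₀ * ρ₁ * ρ₂)
    (s : ℤ) (hs : s = ρ₁ - 3 * ρ₀ * ρ₂) :
    ¬ ∃ d : Fin 3 → ℤ, cross3 d ![ρ₀, ρ₁, ρ₂] = -![ρ₀, s, ρ₂] ∧
      Int.gcd (d 0) (3 * ρ₀) = 1 ∧ Int.gcd (d 1) (3 * ρ₁) = 1 ∧
      Int.gcd (d 2) (3 * ρ₂) = 1 := by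
  rintro ⟨d, hd, g0, g1, g2⟩
  have e0 := congrFun hd 0
  have e1 := congrFun hd 1
  have e2 := congrFun hd 2
  simp [cross3] at e0 e1 e2
  have nd : ∀ (x ρ : ℤ), Int.gcd x (3 * ρ) = 1 → ¬ (3 : ℤ) ∣ x := by
    intro x ρ hg h3
    have : (3 : ℤ) ∣ (Int.gcd x (3 * ρ) : ℤ) := Int.dvd_coe_gcd h3 ⟨ρ, rfl⟩
    rw [hg] at this
    norm_num at this
  refine descent (ρ₀ + ρ₁ + ρ₂).toNat ρ₀ ρ₁ ρ₂ 1 (d 0) (d 1) (d 2) h₀ h₁ h₂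
    (by omega) (by linarith [hM]) ?_ ?_ ?_ (nd _ _ g0) (nd _ _ g1) (nd _ _ g2)
  · linarith [e0]
  · rw [hs] at e1; linarith [e1]
  · linarith [e2]
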